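/- Marginalization of the chemical master equation (core of the Markovian projection theorem for stochastic reaction networks). Let d = d' + d'' and write states z = (z', z'') ∈ ℤ^{d'} × ℤ^{d''}; let the reaction network have J reactions with stoichiometric vectors ν_j = (ν_j', ν_j'') ∈ ℤ^{d'} × ℤ^{d''} and nonnegative propensities a_j : ℤ^d → ℝ. Let T > 0 and let p : ℤ^d × [0,T] → ℝ be nonnegative and satisfy: (i) for every t ∈ [0,T], the family (p(z,t))_{z∈ℤ^d} is summable and, for each j, the family (a_j(z) p(z,t))_{z∈ℤ^d} is summable; (ii) for every z, the map t ↦ p(z,t) is differentiable on [0,T] and satisfies the CME ∂_t p(z,t) = Σ_{j=1}^J a_j(z−ν_j) p(z−ν_j,t) − Σ_{j=1}^J a_j(z) p(z,t); (iii) for every z' ∈ ℤ^{d'} and t, the marginal q(z',t) := Σ_{z''∈ℤ^{d''}} p((z',z''),t) is differentiable in t with ∂_t q(z',t) = Σ_{z''∈ℤ^{d''}} ∂_t p((z',z''),t) (differentiation under the sum). Define the projected propensities ā_j(z',t) := (Σ_{z''∈ℤ^{d''}} a_j((z',z'')) p((z',z''),t)) / q(z',t) if q(z',t) > 0, and ā_j(z',t)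 := 0 otherwise. Then for all z' ∈ ℤ^{d'} and all t ∈ [0,T]: ∂_t q(z',t) = Σ_{j=1}^J ā_j(z'−ν_j',t) q(z'−ν_j',t) − Σ_{j=1}^J ā_j(z',t) q(z',t). That is, the marginal of a solution of the CME solves the CME of the projected network with propensities ā_j and stoichiometric vectors ν_j'. -/
import Mathlib


open scoped BigOperators

/-- The projected (Markovian projection) propensity
`ā(z',t) = (Σ_{z''} a (z',z'') p((z',z''),t)) / q(z',t)` when `q(z',t) > 0`, else `0`. -/
noncomputable def projectedPropensity {σ τ : Type*} (a : σ × τ → ℝ)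
    (p : σ × τ → ℝ → ℝ) (q : σ → ℝ → ℝ) (z' : σ) (t : ℝ) : ℝ :=
  if 0 < q z' t then (∑' z'' : τ, a (z', z'') * p (z', z'') t) / q z' t else 0

/-- **Marginalization of the chemical master equation.**
If `p` is a nonnegative, summable solution of the CME on `ℤ^{d'} × ℤ^{d''}` and
differentiation under the sum is permitted for the marginal
`q(z',t) = Σ_{z''} p((z',z''),t)`, then `q` solves the CME of the projected network
with propensities `ā_j` and stoichiometric vectors `ν_j'`. -/
theorem marginalization_of_CME (d₁ d₂ J : ℕ)
    (ν : Fin J → (Fin d₁ → ℤ) × (Fin d₂ → ℤ))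
    (a : Fin J → (Fin d₁ → ℤ) × (Fin d₂ → ℤ) → ℝ)
    (ha : ∀ j z, 0 ≤ a j z)
    (T : ℝ) (hT : 0 < T)
    (p : (Fin d₁ → ℤ) × (Fin d₂ → ℤ) → ℝ → ℝ)
    (hp : ∀ z, ∀ t ∈ Set.Icc (0 : ℝ) T, 0 ≤ p z t)
    (hsum : ∀ t ∈ Set.Icc (0 : ℝ) T, Summable fun z => p z t)
    (hsum' : ∀ (j : Fin J), ∀ t ∈ Set.Icc (0 : ℝ) T, Summable fun z => a j z * p z t)
    (hCME : ∀ z, ∀ t ∈ Set.Icc (0 : ℝ) T,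
      HasDerivAt (fun τ => p z τ)
        (∑ j, a j (z - ν j) * p (z - ν j) t - ∑ j, a j z * p z t) t)
    (q : (Fin d₁ → ℤ) → ℝ → ℝ)
    (hq : ∀ z' t, q z' t = ∑' z'' : Fin d₂ → ℤ, p (z', z'') t)
    (hqderiv : ∀ z', ∀ t ∈ Set.Icc (0 : ℝ) T,
      HasDerivAt (fun τ => q z' τ)
        (∑' z'' : Fin d₂ → ℤ,
          (∑ j, a j ((z', z'') - ν j) * p ((z', z'') - ν j) t
            - ∑ j, a j (z', z'') * p (z', z'') t)) t) :
    ∀ z', ∀ t ∈ Set.Icc (0 : ℝ) T,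
      HasDerivAt (fun τ => q z' τ)
        (∑ j, projectedPropensity (a j) p q (z' - (ν j).1) t * q (z' - (ν j).1) t
          - ∑ j, projectedPropensity (a j) p q z' t * q z' t) t := by
  intro z' t ht
  have hinj : ∀ w : Fin d₁ → ℤ, Function.Injective (fun z'' : Fin d₂ → ℤ => (w, z'')) :=
    fun w x y h => congrArg Prod.snd h
  have hsG : ∀ (j : Fin J) (w : Fin d₁ → ℤ),
      Summable (fun z'' : Fin d₂ → ℤ => a j (w, z'') * p (w, z'') t) :=
    fun j w => (hsum' j t ht).comp_injective (hinj w)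
  have key : ∀ (j : Fin J) (w : Fin d₁ → ℤ),
      projectedPropensity (a j) p q w t * q w t
        = ∑' z'' : Fin d₂ → ℤ, a j (w, z'') * p (w, z'') t := by
    intro j w
    have hsf : Summable (fun z'' : Fin d₂ → ℤ => p (w, z'') t) :=
      (hsum t ht).comp_injective (hinj w)
    have hqnn : 0 ≤ q w t := by
      rw [hq]; exact tsum_nonneg fun z'' => hp _ t ht
    by_cases h : 0 < q w t
    · simp only [projectedPropensity, if_pos h]
      exact div_mul_cancel₀ _ h.ne'
    · simp only [projectedPropensity, if_neg h, zero_mul]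
      have hq0 : (∑' z'' : Fin d₂ → ℤ, p (w, z'') t) = 0 := by
        rw [← hq]; exact le_antisymm (not_lt.mp h) hqnn
      have hz : ∀ z'' : Fin d₂ → ℤ, p (w, z'') t = 0 := by
        intro z''
        have h1 : p (w, z'') t ≤ ∑' z'' : Fin d₂ → ℤ, p (w, z'') t :=
          Summable.le_tsum hsf z'' (fun b _ => hp _ t ht)
        exact le_antisymm (hq0 ▸ h1) (hp _ t ht)
      symm
      calc (∑' z'' : Fin d₂ → ℤ, a j (w, z'') * p (w, z'') t)
          = ∑' z'' : Fin d₂ → ℤ, (0 : ℝ) := tsum_congr fun z'' => by rw [hz, mul_zero]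
        _ = 0 := tsum_zero
  have hsF : ∀ j : Fin J,
      Summable (fun z'' : Fin d₂ → ℤ => a j ((z', z'') - ν j) * p ((z', z'') - ν j) t) := by
    intro j
    have h1 : Summable (fun z : (Fin d₁ → ℤ) × (Fin d₂ → ℤ) =>
        a j (z - ν j) * p (z - ν j) t) :=
      (hsum' j t ht).comp_injective (Equiv.subRight (ν j)).injective
    exact h1.comp_injective (hinj z')
  have shift : ∀ j : Fin J,
      (∑' z'' : Fin d₂ → ℤ, a j ((z', z'') - ν j) * p ((z', z'') - ν j) t)
        = ∑' z'' : Fin d₂ → ℤ,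
            a j (z' - (ν j).1, z'') * p (z' - (ν j).1, z'') t := by
    intro j
    have := (Equiv.subRight ((ν j).2)).tsum_eq
      (fun z'' : Fin d₂ → ℤ => a j (z' - (ν j).1, z'') * p (z' - (ν j).1, z'') t)
    rw [← this]
    refine tsum_congr fun z'' => ?_
    have hpr : ((z', z'') : (Fin d₁ → ℤ) × (Fin d₂ → ℤ)) - ν j
        = (z' - (ν j).1, z'' - (ν j).2) := rfl
    simp [hpr, Equiv.subRight]
  have hD := hqderiv z' t ht
  convert hD using 1
  rw [Summable.tsum_sub (summable_sum fun j _ => hsF j) (summable_sum fun j _ => hsG j z'),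
      Summable.tsum_finsetSum (fun j _ => hsF j), Summable.tsum_finsetSum (fun j _ => hsG j z')]
  congr 1
  · exact Finset.sum_congr rfl fun j _ => by rw [key j, shift j]
  · exact Finset.sum_congr rfl fun j _ => key j z'
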